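/- Let n > 1 and let ρ(ζ) = exp( e^{2ζ}/4 − ((n+3)/(n−1)) ζ ), dμ = ρ dζ. Then there exists R₀ ∈ ℝ such that for every R ≥ R₀ and every continuously differentiable w : ℝ → ℝ with ∫_ℝ (w² + (w')²) dμ < ∞, ∫_R^∞ [ (1/2) w'(ζ)² − ((n+1)/(n−1)²) w(ζ)² ] dμ(ζ) ≥ (1/4) ∫_R^∞ [ w'(ζ)² + w(ζ)² ] dμ(ζ). -/

import Mathlib

set_option maxHeartbeats 1000000

open Real MeasureTheory Set Filter Topology

/-- Tail estimate for the energy: for `R` large enough and any `C¹` function `w` with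
`∫ (w² + w'²) dμ < ∞`, one has
`∫_R^∞ [ (1/2)(w')² - ((n+1)/(n-1)²) w² ] dμ ≥ (1/4) ∫_R^∞ [ (w')² + w² ] dμ`. -/
theorem energy_tail_estimate (n : ℝ) (hn : 1 < n)
    (ρ : ℝ → ℝ)
    (hρ : ρ = fun ζ : ℝ =>
      Real.exp (Real.exp (2 * ζ) / 4 - (n + 3) / (n - 1) * ζ)) :
    ∃ R₀ : ℝ, ∀ R ≥ R₀, ∀ w : ℝ → ℝ, ContDiff ℝ 1 w →
      Integrable (fun ζ => (w ζ ^ 2 + deriv w ζ ^ 2) * ρ ζ) →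
      (1 / 4) * ∫ ζ in Set.Ioi R, (deriv w ζ ^ 2 + w ζ ^ 2) * ρ ζ ≤
        ∫ ζ in Set.Ioi R,
          ((1 / 2) * deriv w ζ ^ 2 - (n + 1) / (n - 1) ^ 2 * w ζ ^ 2) * ρ ζ := by
  set a : ℝ := (n + 3) / (n - 1) with ha
  set c : ℝ := (n + 1) / (n - 1) ^ 2 with hc
  have hn1 : (0:ℝ) < n - 1 := by linarith
  have hapos : 0 < a := div_pos (by linarith) hn1
  have hcpos : 0 < c := div_pos (by linarith) (by positivity)
  set M : ℝ := 4 * c + 2 with hM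
  have hMpos : 0 < M := by positivity
  refine ⟨Real.log (2 * (a + M)) / 2, fun R hR w hw hint => ?_⟩
  -- basic fun_prop facts
  have hρc : Continuous ρ := by
    rw [hρ]; fun_prop
  have hρpos : ∀ x, 0 < ρ x := fun x => by rw [hρ]; exact Real.exp_pos _
  have hwc : Continuous w := hw.continuous
  have hdwc : Continuous (deriv w) := hw.continuous_deriv le_rfl
  -- derivative of ρ
  have hρd : ∀ x : ℝ, HasDerivAt ρ ((Real.exp (2*x)/2 - a) * ρ x) x := by
    intro x
    have h1 : HasDerivAt (fun x : ℝ => Real.exp (2*x)/4 - a*x)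
        (Real.exp (2*x)*2/4 - a) x := by
      have := ((hasDerivAt_id x).const_mul 2).exp
      have h2 := (this.div_const 4).sub ((hasDerivAt_id x).const_mul a)
      simp only [id, mul_one, Pi.sub_def] at h2
      exact h2
    have := h1.exp
    rw [hρ]
    convert this using 1
    ring
  -- the key growth bound on the log-derivative of ρ
  have hF' : ∀ x, R ≤ x → M ≤ Real.exp (2*x)/2 - a := by
    intro x hx
    have h2 : Real.log (2*(a+M)) ≤ 2*x := by
      have : Real.log (2*(a+M)) / 2 ≤ x := le_trans hR hx
      linarith
    have h3 : 2*(a+M) ≤ Real.exp (2*x) := by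
      calc 2*(a+M) = Real.exp (Real.log (2*(a+M))) := by
            rw [Real.exp_log (by positivity)]
        _ ≤ Real.exp (2*x) := Real.exp_le_exp.mpr h2
    linarith
  -- integrability facts
  have hsum_nonneg : ∀ x, 0 ≤ (w x ^ 2 + deriv w x ^ 2) * ρ x := fun x => by
    have := (hρpos x).le; positivity
  have hIsum : IntegrableOn (fun ζ => (w ζ ^ 2 + deriv w ζ ^ 2) * ρ ζ) (Ioi R) :=
    hint.integrableOn
  have hI2 : IntegrableOn (fun ζ => w ζ ^ 2 * ρ ζ) (Ioi R) := by
    refine Integrable.mono' hIsum ((hwc.pow 2).mul hρc).aestronglyMeasurable ?_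
    filter_upwards with x
    rw [Real.norm_eq_abs, abs_of_nonneg (by have := (hρpos x).le; positivity)]
    nlinarith [sq_nonneg (deriv w x), (hρpos x).le]
  have hI1 : IntegrableOn (fun ζ => deriv w ζ ^ 2 * ρ ζ) (Ioi R) := by
    refine Integrable.mono' hIsum ((hdwc.pow 2).mul hρc).aestronglyMeasurable ?_
    filter_upwards with x
    rw [Real.norm_eq_abs, abs_of_nonneg (by have := (hρpos x).le; positivity)]
    nlinarith [sq_nonneg (w x), (hρpos x).le]
  set I₁ : ℝ := ∫ ζ in Ioi R, deriv w ζ ^ 2 * ρ ζ with hI₁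
  set I₂ : ℝ := ∫ ζ in Ioi R, w ζ ^ 2 * ρ ζ with hI₂
  have hI₁nonneg : 0 ≤ I₁ :=
    setIntegral_nonneg measurableSet_Ioi (fun x _ => by have := (hρpos x).le; positivity)
  have hI₂nonneg : 0 ≤ I₂ :=
    setIntegral_nonneg measurableSet_Ioi (fun x _ => by have := (hρpos x).le; positivity)
  set C : ℝ := ∫ ζ in Ioi R, (w ζ ^ 2 + deriv w ζ ^ 2) * ρ ζ with hC
  have hCsplit : C = I₂ + I₁ := by
    rw [hC, hI₁, hI₂, ← integral_add hI2 hI1]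
    congr 1; ext x; ring
  -- the Poincaré-type inequality : M * I₂ ≤ C
  have key : M * I₂ ≤ C := by
    refine le_of_forall_pos_le_add (fun ε hε => ?_)
    -- for each k, find T ≥ max R k with w T ^ 2 * ρ T < ε
    have claim : ∀ k : ℕ, ∃ T : ℝ, max R k ≤ T ∧ w T ^ 2 * ρ T < ε := by
      intro k
      by_contra hcon
      push_neg at hcon
      have hεint : IntegrableOn (fun _ : ℝ => ε) (Ioi (max R k)) := by
        refine Integrable.mono' (hI2.mono_set (Ioi_subset_Ioi (le_max_left R k)))
          aestronglyMeasurable_const ?_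
        refine ae_restrict_of_forall_mem measurableSet_Ioi (fun x hx => ?_)
        rw [Real.norm_eq_abs, abs_of_pos hε]
        exact hcon x (le_of_lt hx)
      rw [integrableOn_const_iff] at hεint
      rcases hεint with h | h
      · exact absurd (by simpa using h) (ne_of_gt hε)
      · rw [Real.volume_Ioi] at h; exact absurd h (lt_irrefl _)
    choose T hT1 hT2 using claim
    have hTR : ∀ k, R ≤ T k := fun k => le_trans (le_max_left _ _) (hT1 k)
    have hTtop : Tendsto T atTop atTop :=
      tendsto_atTop_mono (fun k => le_trans (le_max_right R k) (hT1 k))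
        tendsto_natCast_atTop_atTop
    -- per-T bound
    have perT : ∀ k : ℕ, M * ∫ x in R..(T k), w x ^ 2 * ρ x ≤ C + ε := by
      intro k
      set b := T k with hb
      have hRb : R ≤ b := hTR k
      -- FTC for g = w² ρ
      have hg : ∀ x ∈ uIcc R b, HasDerivAt (fun x => w x ^ 2 * ρ x)
          (2 * w x * deriv w x * ρ x + w x ^ 2 * ((Real.exp (2*x)/2 - a) * ρ x)) x := by
        intro x _
        have hwd : HasDerivAt w (deriv w x) x :=
          (hw.differentiable one_ne_zero).differentiableAt.hasDerivAt
        have := (hwd.pow 2).mul (hρd x)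
        refine HasDerivAt.congr_deriv this ?_
        simp only [Pi.pow_apply]
        ring
      have hcontd : Continuous (fun x =>
          2 * w x * deriv w x * ρ x + w x ^ 2 * ((Real.exp (2*x)/2 - a) * ρ x)) := by
        fun_prop
      have hftc := intervalIntegral.integral_eq_sub_of_hasDerivAt hg
        (hcontd.intervalIntegrable R b)
      -- split the interval integral
      have hsplit : (∫ x in R..b, (2 * w x * deriv w x * ρ x
            + w x ^ 2 * ((Real.exp (2*x)/2 - a) * ρ x)))
          = (∫ x in R..b, 2 * w x * deriv w x * ρ x)
            + ∫ x in R..b, w x ^ 2 * ((Real.exp (2*x)/2 - a) * ρ x) := by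
        refine intervalIntegral.integral_add ?_ ?_
        · exact (by fun_prop : Continuous fun x => 2 * w x * deriv w x * ρ x).intervalIntegrable R b
        · exact (by fun_prop : Continuous fun x => w x ^ 2 * ((Real.exp (2*x)/2 - a) * ρ x)).intervalIntegrable R b
      -- bound M * ∫ w²ρ ≤ ∫ w² F' ρ over Ioc R b
      have hstep1 : M * ∫ x in R..b, w x ^ 2 * ρ x
          ≤ ∫ x in R..b, w x ^ 2 * ((Real.exp (2*x)/2 - a) * ρ x) := by
        rw [intervalIntegral.integral_of_le hRb, intervalIntegral.integral_of_le hRb,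
          ← integral_const_mul]
        refine setIntegral_mono_on ?_ ?_ measurableSet_Ioc ?_
        · exact ((continuous_const.mul ((hwc.pow 2).mul hρc)).integrableOn_Ioc)
        · exact (by fun_prop : Continuous fun x => w x ^ 2 * ((Real.exp (2*x)/2 - a) * ρ x)).integrableOn_Ioc
        · intro x hx
          have hMle : M ≤ Real.exp (2*x)/2 - a := hF' x hx.1.le
          have h0 : 0 ≤ w x ^ 2 * ρ x := by have := (hρpos x).le; positivity
          nlinarith
      -- bound -∫ 2ww'ρ ≤ ∫ (w²+w'²)ρ over Ioc R b
      have hstep2 : -(∫ x in R..b, 2 * w x * deriv w x * ρ x)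
          ≤ ∫ x in R..b, (w x ^ 2 + deriv w x ^ 2) * ρ x := by
        rw [intervalIntegral.integral_of_le hRb, intervalIntegral.integral_of_le hRb,
          ← integral_neg]
        refine setIntegral_mono_on ?_ ?_ measurableSet_Ioc ?_
        · exact (by fun_prop : Continuous fun x => -(2 * w x * deriv w x * ρ x)).integrableOn_Ioc
        · exact ((hwc.pow 2).add (hdwc.pow 2)).mul hρc |>.integrableOn_Ioc
        · intro x _
          nlinarith [sq_nonneg (w x + deriv w x), (hρpos x).le]
      -- bound ∫_{Ioc}(w²+w'²)ρ ≤ C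
      have hstep3 : (∫ x in R..b, (w x ^ 2 + deriv w x ^ 2) * ρ x) ≤ C := by
        rw [intervalIntegral.integral_of_le hRb, hC]
        refine setIntegral_mono_set hIsum ?_ ?_
        · exact ae_restrict_of_forall_mem measurableSet_Ioi (fun x _ => hsum_nonneg x)
        · exact HasSubset.Subset.eventuallyLE Ioc_subset_Ioi_self
      have hgR : 0 ≤ w R ^ 2 * ρ R := by have := (hρpos R).le; positivity
      have hgb : w b ^ 2 * ρ b < ε := hT2 k
      calc M * ∫ x in R..b, w x ^ 2 * ρ x
          ≤ ∫ x in R..b, w x ^ 2 * ((Real.exp (2*x)/2 - a) * ρ x) := hstep1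
        _ = (w b ^ 2 * ρ b - w R ^ 2 * ρ R)
              - ∫ x in R..b, 2 * w x * deriv w x * ρ x := by
            rw [← hftc, hsplit]; ring
        _ ≤ ε + ∫ x in R..b, (w x ^ 2 + deriv w x ^ 2) * ρ x := by linarith
        _ ≤ C + ε := by linarith
    -- pass to the limit
    have htend : Tendsto (fun k => M * ∫ x in R..(T k), w x ^ 2 * ρ x) atTop
        (𝓝 (M * I₂)) := by
      exact (MeasureTheory.intervalIntegral_tendsto_integral_Ioi R hI2 hTtop).const_mul M
    exact le_of_tendsto htend (Filter.Eventually.of_forall perT)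
  -- conclude
  have hpoincare : (4*c + 1) * I₂ ≤ I₁ := by
    rw [hCsplit] at key; nlinarith
  have hLHS : (∫ ζ in Ioi R, (deriv w ζ ^ 2 + w ζ ^ 2) * ρ ζ) = I₁ + I₂ := by
    rw [hI₁, hI₂, ← integral_add hI1 hI2]
    congr 1; ext x; ring
  have hRHS : (∫ ζ in Ioi R, ((1/2) * deriv w ζ ^ 2 - c * w ζ ^ 2) * ρ ζ)
      = (1/2) * I₁ - c * I₂ := by
    rw [hI₁, hI₂, ← integral_const_mul, ← integral_const_mul,
      ← integral_sub (hI1.const_mul _) (hI2.const_mul _)]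
    congr 1; ext x; ring
  rw [hLHS, hRHS]
  nlinarith
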